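/- For p ≥ 1, q_p(G) ≤ 2^{p-1}·ψ(G), where ψ(G) = min over disjoint S,T ⊆ V with S ∪ T nonempty of (2e(S) + 2e(T) + cut(S ∪ T))/|S ∪ T|. -/

import Mathlib

open Finset

variable {V : Type*}

/-- Signless p-Laplacian form: `Q_p(x) = Σ_{{i,j}∈E} |x_i + x_j|^p`. -/
noncomputable def Qp [Fintype V] (G : SimpleGraph V) [Fintype G.edgeSet] (p : ℝ)
    (x : V → ℝ) : ℝ :=
  ∑ e ∈ G.edgeFinset,
    Sym2.lift ⟨fun i j => |x i + x j| ^ p, fun i j => by simp [add_comm]⟩ e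

/-- The p-norm unit sphere condition. -/
def unitSphere [Fintype V] (p : ℝ) (x : V → ℝ) : Prop := ∑ i, |x i| ^ p = 1

/-- Smallest signless p-Laplacian eigenvalue. -/
noncomputable def qp [Fintype V] (G : SimpleGraph V) [Fintype G.edgeSet] (p : ℝ) : ℝ :=
  sInf {r | ∃ x : V → ℝ, unitSphere p x ∧ Qp G p x = r}

/-- Largest signless p-Laplacian eigenvalue. -/
noncomputable def lamp [Fintype V] (G : SimpleGraph V) [Fintype G.edgeSet] (p : ℝ) : ℝ :=
  sSup {r | ∃ x : V → ℝ, unitSphere p x ∧ Qp G p x = r}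

open Classical in
/-- Number of edges with both endpoints in `S`. -/
noncomputable def eIn [Fintype V] (G : SimpleGraph V) [Fintype G.edgeSet] (S : Finset V) : ℕ :=
  (G.edgeFinset.filter fun e => ∀ v ∈ e, v ∈ S).card

open Classical in
/-- Number of edges with exactly one endpoint in `U`. -/
noncomputable def cutN [Fintype V] (G : SimpleGraph V) [Fintype G.edgeSet] (U : Finset V) : ℕ :=
  (G.edgeFinset.filter fun e => (∃ v ∈ e, v ∈ U) ∧ (∃ w ∈ e, w ∉ U)).card

/-- Desai–Rao bipartiteness parameter ψ(G). -/
noncomputable def psi [Fintype V] [DecidableEq V] (G : SimpleGraph V) [Fintype G.edgeSet] : ℝ :=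
  sInf {r | ∃ S T : Finset V, Disjoint S T ∧ (S ∪ T).Nonempty ∧
    r = (2 * eIn G S + 2 * eIn G T + cutN G (S ∪ T)) / (S ∪ T).card}

open Classical in
/-- `h_g(U)`: min over thresholds `0 ≤ t < max g` of `cut(C_t)/|C_t|` where `C_t = {i : g i > t}`. -/
noncomputable def hgC [Fintype V] [DecidableEq V] (G : SimpleGraph V) [Fintype G.edgeSet]
    (g : V → ℝ) : ℝ :=
  sInf {r | ∃ t : ℝ, 0 ≤ t ∧ t < sSup (Set.range g) ∧
    r = (cutN G (univ.filter fun i => t < g i) : ℝ) / (univ.filter fun i => t < g i).card}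

/-- Eigenpair of the signless p-Laplacian. -/
def IsEigenpair [Fintype V] (G : SimpleGraph V) [DecidableRel G.Adj] (p : ℝ)
    (x : V → ℝ) (μ : ℝ) : Prop :=
  ∀ k, ∑ j ∈ G.neighborFinset k, Real.sign (x k + x j) * |x k + x j| ^ (p - 1)
      = μ * (Real.sign (x k) * |x k| ^ (p - 1))

/-- Vertex bipartiteness: minimum number of vertices to delete to make `G` bipartite. -/
noncomputable def nuG [Fintype V] [DecidableEq V] (G : SimpleGraph V) : ℕ :=
  sInf {k | ∃ S : Finset V, S.card = k ∧ ((SimpleGraph.induce ((↑S : Set V)ᶜ) G).Colorable 2)}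

lemma filtcc {α : Type*} {s : Finset α} (P : α → Prop) (h1 h2 : DecidablePred P) :
    (@Finset.filter _ P h1 s) = (@Finset.filter _ P h2 s) := by
  have : h1 = h2 := Subsingleton.elim _ _
  subst this; rfl

set_option maxHeartbeats 1000000 in
lemma myaux [Fintype V] [DecidableEq V] (G : SimpleGraph V) [DecidableRel G.Adj]
    (p : ℝ) (hp : 1 ≤ p) (S T : Finset V) (hST : Disjoint S T)
    (hne : (S ∪ T).Nonempty) :
    qp G p ≤ 2 ^ (p-1) * (((2 * eIn G S + 2 * eIn G T + cutN G (S ∪ T) : ℕ) : ℝ) / (S ∪ T).card) := by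
  classical
  have hp0 : p ≠ 0 := by positivity
  set n : ℝ := ((S ∪ T).card : ℝ) with hn
  have hn0 : 0 < n := by
    have := Finset.card_pos.2 hne
    rw [hn]; exact_mod_cast this
  set c : ℝ := (1/n) ^ (1/p) with hcdef
  have hc : 0 ≤ c := Real.rpow_nonneg (by positivity) _
  have hcp : c ^ p = 1/n := by
    rw [hcdef, ← Real.rpow_mul (by positivity), one_div_mul_cancel hp0, Real.rpow_one]
  set x : V → ℝ := fun i => if i ∈ S then c else if i ∈ T then -c else 0 with hx
  have hdisj := Finset.disjoint_left.1 hST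
  -- unit sphere
  have hunit : unitSphere p x := by
    have habs : ∀ i, |x i| ^ p = if i ∈ S ∪ T then 1/n else 0 := by
      intro i
      by_cases hiS : i ∈ S <;> by_cases hiT : i ∈ T <;>
        simp [hx, hiS, hiT, abs_of_nonneg hc, Real.zero_rpow hp0, hcp]
    unfold unitSphere
    rw [Finset.sum_congr rfl (fun i _ => habs i), Finset.sum_ite_mem,
      Finset.univ_inter, Finset.sum_const, nsmul_eq_mul, ← hn]
    field_simp
  -- key facts
  have e1 : |c + c| ^ p = 2 ^ p * (1/n) := by
    rw [abs_of_nonneg (by positivity)]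
    have h2 : c + c = 2 * c := by ring
    rw [h2, Real.mul_rpow (by norm_num) hc, hcp]
  have e3 : |c| ^ p = 1/n := by rw [abs_of_nonneg hc, hcp]
  have e2 : |-c + -c| ^ p = 2 ^ p * (1/n) := by
    rw [show -c + -c = -(c+c) by ring, abs_neg]; exact e1
  -- Qp value
  have hQ : Qp G p x = 2 ^ p * (1/n) * (eIn G S) + 2 ^ p * (1/n) * (eIn G T)
      + (1/n) * (cutN G (S ∪ T)) := by
    have hedge : ∀ e ∈ G.edgeFinset,
        Sym2.lift ⟨fun i j => |x i + x j| ^ p, fun i j => by simp [add_comm]⟩ e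
        = (if ∀ v ∈ e, v ∈ S then 2 ^ p * (1/n) else 0)
          + (if ∀ v ∈ e, v ∈ T then 2 ^ p * (1/n) else 0)
          + (if (∃ v ∈ e, v ∈ S ∪ T) ∧ (∃ w ∈ e, w ∉ S ∪ T) then (1/n) else 0) := by
      intro e he
      induction e with
      | _ i j =>
        by_cases hiS : i ∈ S <;> by_cases hjS : j ∈ S <;>
          by_cases hiT : i ∈ T <;> by_cases hjT : j ∈ T <;>
          first
          | exact absurd hiT (hdisj hiS)
          | exact absurd hjT (hdisj hjS)
          | simp [hx, hiS, hjS, hiT, hjT, Sym2.mem_iff, e1, e3, abs_neg,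
              Real.zero_rpow hp0, e2, neg_add_rev, add_comm]
    rw [Qp, Finset.sum_congr rfl hedge]
    rw [Finset.sum_add_distrib, Finset.sum_add_distrib]
    rw [Finset.sum_ite, Finset.sum_ite, Finset.sum_ite]
    simp only [Finset.sum_const, Finset.sum_const_zero, add_zero, nsmul_eq_mul,
      smul_zero, mul_zero]
    rw [eIn, eIn, cutN]
    congr 1
    · congr 1
      · rw [mul_comm]; congr 1
        exact congrArg (fun t : Finset (Sym2 V) => ((t.card : ℝ))) (filtcc _ _ _)
      · rw [mul_comm]; congr 1
        exact congrArg (fun t : Finset (Sym2 V) => ((t.card : ℝ))) (filtcc _ _ _)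
    · rw [mul_comm]; congr 1
      exact congrArg (fun t : Finset (Sym2 V) => ((t.card : ℝ))) (filtcc _ _ _)
  -- qp ≤ Qp x
  have hqle : qp G p ≤ Qp G p x := by
    apply csInf_le
    · refine ⟨0, fun r hr => ?_⟩
      obtain ⟨y, -, rfl⟩ := hr
      refine Finset.sum_nonneg fun e _ => ?_
      induction e with
      | _ i j => simp only [Sym2.lift_mk]; positivity
    · exact ⟨x, hunit, rfl⟩
  refine hqle.trans ?_
  rw [hQ]
  have h2p : (2:ℝ) ^ p = 2 ^ (p-1) * 2 := by
    rw [← Real.rpow_add_one (by norm_num) (p-1)]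
    ring_nf
  have h1le : (1:ℝ) ≤ 2 ^ (p-1) := by
    have := Real.rpow_le_rpow_left_iff (x := (2:ℝ)) (by norm_num) (y := 0) (z := p-1)
    calc (1:ℝ) = 2 ^ (0:ℝ) := by simp
    _ ≤ 2 ^ (p-1) := by
        apply Real.rpow_le_rpow_of_exponent_le (by norm_num); linarith
  rw [Nat.cast_add, Nat.cast_add, Nat.cast_mul, Nat.cast_mul]
  rw [add_div, add_div, mul_add, mul_add]
  have hcut : (1/n) * (cutN G (S ∪ T) : ℝ) ≤ 2 ^ (p-1) * ((cutN G (S ∪ T) : ℝ) / n) := by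
    rw [one_div, inv_mul_eq_div]
    nlinarith [div_nonneg (Nat.cast_nonneg (cutN G (S ∪ T))) hn0.le]
  have hS' : 2 ^ p * (1/n) * (eIn G S : ℝ) = 2 ^ (p-1) * ((2:ℕ) * (eIn G S : ℝ) / n) := by
    rw [h2p]; field_simp; ring
  have hT' : 2 ^ p * (1/n) * (eIn G T : ℝ) = 2 ^ (p-1) * ((2:ℕ) * (eIn G T : ℝ) / n) := by
    rw [h2p]; field_simp; ring
  rw [hS', hT']
  push_cast
  linarith [hcut]

theorem stmt_2 [Fintype V] [DecidableEq V] [Nonempty V] (G : SimpleGraph V)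
    [DecidableRel G.Adj] (p : ℝ) (hp : 1 ≤ p) :
    qp G p ≤ (2 : ℝ) ^ (p - 1) * psi G := by
  classical
  have hc2 : (0:ℝ) < 2 ^ (p-1) := Real.rpow_pos_of_pos (by norm_num) _
  rw [← div_le_iff₀' hc2]
  unfold psi
  apply le_csInf
  · obtain ⟨v⟩ := (inferInstance : Nonempty V)
    exact ⟨_, {v}, ∅, by simp, by simp, rfl⟩
  rintro r ⟨S, T, hd, hne', rfl⟩
  rw [div_le_iff₀' hc2]
  have h := myaux G p hp S T hd hne'
  convert h using 3
  · rfl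
  push_cast
  ring
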